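/- Let f : ℝ^d → ℝ be twice continuously differentiable, L-smooth, satisfy the PL inequality with constant μ > 0, and have min f = 0 (attained). Fix α > 0 and define E(x, v) := f(x) + (α/(α² + 2L))⟨∇f(x), v⟩ + (L/(α² + 2L))‖v‖². Then there exists a constant C₁ > 0 such that E(x, v) ≥ C₁(‖∇f(x)‖² + ‖v‖²) for all x, v ∈ ℝ^d, and there exists a constant C₂ > 0 such that for every solution (x_t, v_t)_{t ≥ 0} of the heavy ball ODE with friction parameter α, E(x_t, v_t) ≤ e^{−C₂ t} E(x_0, v_0) for all t ≥ 0. -/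

import Mathlib

open Topology RealInnerProductSpace

private lemma hb_descent {d : ℕ} (f : EuclideanSpace ℝ (Fin d) → ℝ) (L : ℝ)
    (hdiff : Differentiable ℝ f)
    (hLip : ∀ x y, ‖gradient f x - gradient f y‖ ≤ L * ‖x - y‖) :
    ∀ x u, f (x + u) ≤ f x + ⟪gradient f x, u⟫ + L / 2 * ‖u‖ ^ 2 := by
  intro x u
  have hc : ∀ t : ℝ, HasDerivAt (fun t : ℝ => x + t • u) u t := fun t => by
    simpa using ((hasDerivAt_id t).smul_const u).const_add x
  have hφ : ∀ t : ℝ, HasDerivAt (fun t : ℝ => f (x + t • u))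
      ⟪gradient f (x + t • u), u⟫ t := by
    intro t
    have h1 := ((hdiff (x + t • u)).hasGradientAt.hasFDerivAt).comp_hasDerivAt t (hc t)
    simpa [InnerProductSpace.toDual_apply_apply, Function.comp_def] using h1
  set h : ℝ → ℝ := fun t =>
    f x + t * ⟪gradient f x, u⟫ + L / 2 * t ^ 2 * ‖u‖ ^ 2 - f (x + t • u) with hh_def
  have hh : ∀ t : ℝ, HasDerivAt h
      (⟪gradient f x, u⟫ + L * t * ‖u‖ ^ 2 - ⟪gradient f (x + t • u), u⟫) t := by
    intro t
    have h2 : HasDerivAt (fun t : ℝ => f x + t * ⟪gradient f x, u⟫ + L / 2 * t ^ 2 * ‖u‖ ^ 2)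
        (⟪gradient f x, u⟫ + L * t * ‖u‖ ^ 2) t := by
      have ha : HasDerivAt (fun t : ℝ => t * ⟪gradient f x, u⟫) ⟪gradient f x, u⟫ t := by
        simpa using (hasDerivAt_id t).mul_const ⟪gradient f x, u⟫
      have hb : HasDerivAt (fun t : ℝ => L / 2 * t ^ 2 * ‖u‖ ^ 2) (L * t * ‖u‖ ^ 2) t := by
        have := ((hasDerivAt_pow 2 t).const_mul (L / 2)).mul_const (‖u‖ ^ 2)
        have e : L * t * ‖u‖ ^ 2 = L / 2 * (((2:ℕ):ℝ) * t ^ (2 - 1)) * ‖u‖ ^ 2 := by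
          rw [show (2:ℕ) - 1 = 1 from rfl]; push_cast; ring
        rw [e]; exact this
      exact (ha.const_add (f x)).add hb
    exact h2.sub (hφ t)
  have hmono : MonotoneOn h (Set.Ici (0 : ℝ)) := by
    apply monotoneOn_of_deriv_nonneg (convex_Ici 0)
    · exact fun t _ => ((hh t).continuousAt).continuousWithinAt
    · exact fun t _ => ((hh t).differentiableAt).differentiableWithinAt
    · intro t ht
      rw [interior_Ici] at ht
      rw [(hh t).deriv]
      have h3 : ‖gradient f (x + t • u) - gradient f x‖ ≤ L * (t * ‖u‖) := by
        have := hLip (x + t • u) x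
        simpa [norm_smul, abs_of_pos (Set.mem_Ioi.1 ht)] using this
      have h4 : ⟪gradient f (x + t • u), u⟫ - ⟪gradient f x, u⟫ ≤ L * (t * ‖u‖) * ‖u‖ := by
        have h5 : ⟪gradient f (x + t • u) - gradient f x, u⟫ ≤
            ‖gradient f (x + t • u) - gradient f x‖ * ‖u‖ := real_inner_le_norm _ _
        rw [inner_sub_left] at h5
        nlinarith [norm_nonneg u]
      nlinarith
  have hkey := hmono (Set.mem_Ici.2 le_rfl) (Set.mem_Ici.2 (zero_le_one)) zero_le_one
  have h0 : h 0 = 0 := by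
    simp [hh_def]
  have h1 : h 1 = f x + ⟪gradient f x, u⟫ + L / 2 * ‖u‖ ^ 2 - f (x + u) := by
    simp only [hh_def, one_smul, one_mul, one_pow, mul_one]
  rw [h0, h1] at hkey
  linarith

set_option maxHeartbeats 2000000 in
theorem heavy_ball_lyapunov_estimates
    (d : ℕ) (f : EuclideanSpace ℝ (Fin d) → ℝ) (μ L : ℝ) (hμ : 0 < μ) (hL : 0 < L)
    (hC2 : ContDiff ℝ 2 f)
    (xstar : EuclideanSpace ℝ (Fin d)) (hstar : ∀ y, f xstar ≤ f y) (hzero : f xstar = 0)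
    (hPL : ∀ x, 2 * μ * (f x - f xstar) ≤ ‖gradient f x‖ ^ 2)
    (hLip : ∀ x y, ‖gradient f x - gradient f y‖ ≤ L * ‖x - y‖)
    (α : ℝ) (hα : 0 < α) :
    (∃ C₁ : ℝ, 0 < C₁ ∧ ∀ x v : EuclideanSpace ℝ (Fin d),
      C₁ * (‖gradient f x‖ ^ 2 + ‖v‖ ^ 2) ≤
        f x + α / (α ^ 2 + 2 * L) * ⟪gradient f x, v⟫ + L / (α ^ 2 + 2 * L) * ‖v‖ ^ 2) ∧
    (∃ C₂ : ℝ, 0 < C₂ ∧ ∀ x v : ℝ → EuclideanSpace ℝ (Fin d),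
      (∀ t : ℝ, HasDerivAt x (v t) t) →
      (∀ t : ℝ, HasDerivAt v (-(α • v t) - gradient f (x t)) t) →
      ∀ t : ℝ, 0 ≤ t →
        f (x t) + α / (α ^ 2 + 2 * L) * ⟪gradient f (x t), v t⟫ +
            L / (α ^ 2 + 2 * L) * ‖v t‖ ^ 2 ≤
          Real.exp (-C₂ * t) *
            (f (x 0) + α / (α ^ 2 + 2 * L) * ⟪gradient f (x 0), v 0⟫ +
              L / (α ^ 2 + 2 * L) * ‖v 0‖ ^ 2)) := by
  have hdiff : Differentiable ℝ f := hC2.differentiable (by norm_num)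
  set s : ℝ := α ^ 2 + 2 * L with hs_def
  have hs0 : 0 < s := by positivity
  set a : ℝ := α / s with ha_def
  set b : ℝ := L / s with hb_def
  have ha0 : 0 < a := by positivity
  have hb0 : 0 < b := by positivity
  -- lower bound on f from descent lemma
  have hlow : ∀ x, ‖gradient f x‖ ^ 2 / (2 * L) ≤ f x := by
    intro x
    have hd := hb_descent f L hdiff hLip x (-(L⁻¹ • gradient f x))
    have h0 : (0 : ℝ) ≤ f (x + -(L⁻¹ • gradient f x)) := by
      rw [← hzero]; exact hstar _
    have e1 : ⟪gradient f x, -(L⁻¹ • gradient f x)⟫ = -(L⁻¹ * ‖gradient f x‖ ^ 2) := by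
      rw [inner_neg_right, real_inner_smul_right, real_inner_self_eq_norm_sq]
    have e2 : ‖-(L⁻¹ • gradient f x)‖ ^ 2 = (L⁻¹) ^ 2 * ‖gradient f x‖ ^ 2 := by
      rw [norm_neg, norm_smul]
      simp [mul_pow, abs_of_pos (inv_pos.2 hL)]
    rw [e1, e2] at hd
    have hL' : L⁻¹ * L = 1 := inv_mul_cancel₀ hL.ne'
    have expand : f x + -(L⁻¹ * ‖gradient f x‖ ^ 2) + L / 2 * ((L⁻¹) ^ 2 * ‖gradient f x‖ ^ 2)
        = f x - ‖gradient f x‖ ^ 2 / (2 * L) := by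
      field_simp
      ring
    rw [expand] at hd
    linarith
  -- PL upper bound
  have hup : ∀ x, f x ≤ ‖gradient f x‖ ^ 2 / (2 * μ) := by
    intro x
    have := hPL x
    rw [hzero, sub_zero] at this
    rw [le_div_iff₀ (by positivity)]
    linarith
  constructor
  · -- Part 1
    refine ⟨min 1 (L / 2) / s, by positivity, fun x v => ?_⟩
    set G := ‖gradient f x‖ with hG
    set V := ‖v‖ with hV
    have hG0 : 0 ≤ G := norm_nonneg _
    have hV0 : 0 ≤ V := norm_nonneg _
    have hm1 : min 1 (L / 2) ≤ 1 := min_le_left _ _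
    have hm2 : min 1 (L / 2) ≤ L / 2 := min_le_right _ _
    have hip : -(G * V) ≤ ⟪gradient f x, v⟫ := by
      have := abs_real_inner_le_norm (gradient f x) v
      rw [abs_le] at this
      exact this.1
    have key : 0 ≤ G ^ 2 / (2 * L) - a * (G * V) + b * V ^ 2
        - min 1 (L / 2) / s * (G ^ 2 + V ^ 2) := by
      have expand : G ^ 2 / (2 * L) - a * (G * V) + b * V ^ 2
          - min 1 (L / 2) / s * (G ^ 2 + V ^ 2)
          = (s * G ^ 2 - 2 * L * α * (G * V) + 2 * L ^ 2 * V ^ 2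
              - 2 * L * min 1 (L / 2) * (G ^ 2 + V ^ 2)) / (2 * L * s) := by
        rw [ha_def, hb_def]
        field_simp
      rw [expand]
      apply div_nonneg _ (by positivity)
      nlinarith [sq_nonneg (α * G - L * V),
        mul_le_mul_of_nonneg_right hm1 (sq_nonneg G),
        mul_le_mul_of_nonneg_right hm2 (sq_nonneg V)]
    have hfl := hlow x
    rw [← hG] at hfl
    have haip : a * -(G * V) ≤ a * ⟪gradient f x, v⟫ :=
      mul_le_mul_of_nonneg_left hip ha0.le
    nlinarith
  · -- Part 2
    -- gradient is C¹ with derivative bounded by L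
    have hgradC1 : ContDiff ℝ 1 (gradient f) := by
      have h1 : ContDiff ℝ 1 (fderiv ℝ f) := hC2.fderiv_right (by norm_num)
      have h2 : gradient f = fun y =>
          (InnerProductSpace.toDual ℝ (EuclideanSpace ℝ (Fin d))).symm (fderiv ℝ f y) := rfl
      rw [h2]
      exact (InnerProductSpace.toDual ℝ
        (EuclideanSpace ℝ (Fin d))).symm.contDiff.comp h1
    have hgdiff : Differentiable ℝ (gradient f) := hgradC1.differentiable one_ne_zero
    have hlipW : LipschitzWith (Real.toNNReal L) (gradient f) := by
      apply LipschitzWith.of_dist_le_mul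
      intro x y
      rw [dist_eq_norm, dist_eq_norm, Real.coe_toNNReal _ hL.le]
      exact hLip x y
    have Hnorm : ∀ p, ‖fderiv ℝ (gradient f) p‖ ≤ L := by
      intro p
      have := norm_fderiv_le_of_lipschitz ℝ (x₀ := p) hlipW
      rwa [Real.coe_toNNReal _ hL.le] at this
    have hP0 : (0 : ℝ) < 1 / (2 * μ) + a / 2 := by positivity
    have hQ0 : (0 : ℝ) < a / 2 + b := by positivity
    set P : ℝ := 1 / (2 * μ) + a / 2 with hP_def
    set Q : ℝ := a / 2 + b with hQ_def
    set C₂ : ℝ := min (a / P) (α * b / Q) with hC₂_def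
    have hC₂0 : 0 < C₂ := lt_min (by positivity) (by positivity)
    refine ⟨C₂, hC₂0, fun x v hx hv => ?_⟩
    set g : ℝ → EuclideanSpace ℝ (Fin d) := fun t => gradient f (x t) with hg_def
    set E : ℝ → ℝ := fun t => f (x t) + a * ⟪g t, v t⟫ + b * ‖v t‖ ^ 2 with hE_def
    set D : ℝ → ℝ := fun t =>
      ⟪g t, v t⟫ + a * (⟪g t, -(α • v t) - g t⟫ + ⟪fderiv ℝ (gradient f) (x t) (v t), v t⟫)
        + b * (⟪v t, -(α • v t) - g t⟫ + ⟪-(α • v t) - g t, v t⟫) with hD_def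
    have hE : ∀ t, HasDerivAt E (D t) t := by
      intro t
      have h1 : HasDerivAt (fun t => f (x t)) ⟪g t, v t⟫ t := by
        have := ((hdiff (x t)).hasGradientAt.hasFDerivAt).comp_hasDerivAt t (hx t)
        exact this
      have h2 : HasDerivAt g (fderiv ℝ (gradient f) (x t) (v t)) t :=
        ((hgdiff (x t)).hasFDerivAt).comp_hasDerivAt t (hx t)
      have h3 : HasDerivAt (fun t => ⟪g t, v t⟫)
          (⟪g t, -(α • v t) - g t⟫ + ⟪fderiv ℝ (gradient f) (x t) (v t), v t⟫) t :=
        HasDerivAt.inner ℝ h2 (hv t)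
      have h4 : HasDerivAt (fun t => ‖v t‖ ^ 2)
          (⟪v t, -(α • v t) - g t⟫ + ⟪-(α • v t) - g t, v t⟫) t := by
        have h5 : HasDerivAt (fun t => ⟪v t, v t⟫)
            (⟪v t, -(α • v t) - g t⟫ + ⟪-(α • v t) - g t, v t⟫) t :=
          HasDerivAt.inner ℝ (hv t) (hv t)
        have h6 : (fun t => ‖v t‖ ^ 2) = fun t => ⟪v t, v t⟫ := by
          funext t
          rw [real_inner_self_eq_norm_sq]
        rw [h6]
        exact h5
      exact (h1.add (h3.const_mul a)).add (h4.const_mul b)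
    -- the key differential inequality
    have hDle : ∀ t, D t ≤ -C₂ * E t := by
      intro t
      set G := ‖g t‖ with hG
      set V := ‖v t‖ with hV
      have hG0 : 0 ≤ G := norm_nonneg _
      have hV0 : 0 ≤ V := norm_nonneg _
      have e1 : ⟪g t, -(α • v t) - g t⟫ = -(α * ⟪g t, v t⟫) - G ^ 2 := by
        rw [inner_sub_right, inner_neg_right, real_inner_smul_right, real_inner_self_eq_norm_sq]
      have e2 : ⟪v t, -(α • v t) - g t⟫ = -(α * V ^ 2) - ⟪g t, v t⟫ := by
        rw [inner_sub_right, inner_neg_right, real_inner_smul_right,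
          real_inner_self_eq_norm_sq, real_inner_comm]
      have e3 : ⟪-(α • v t) - g t, v t⟫ = -(α * V ^ 2) - ⟪g t, v t⟫ := by
        rw [real_inner_comm]
        exact e2
      have hHv : ⟪fderiv ℝ (gradient f) (x t) (v t), v t⟫ ≤ L * V ^ 2 := by
        calc ⟪fderiv ℝ (gradient f) (x t) (v t), v t⟫
            ≤ ‖fderiv ℝ (gradient f) (x t) (v t)‖ * ‖v t‖ := real_inner_le_norm _ _
          _ ≤ ‖fderiv ℝ (gradient f) (x t)‖ * ‖v t‖ * ‖v t‖ :=
              mul_le_mul_of_nonneg_right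
                (ContinuousLinearMap.le_opNorm _ _) (norm_nonneg _)
          _ ≤ L * ‖v t‖ * ‖v t‖ := by
              have := Hnorm (x t)
              nlinarith [norm_nonneg (v t)]
          _ = L * V ^ 2 := by rw [hV]; ring
      have hc0 : 1 - a * α - b * 2 = 0 := by
        rw [ha_def, hb_def]
        field_simp
        ring
      have hDval : D t = a * ⟪fderiv ℝ (gradient f) (x t) (v t), v t⟫ - a * G ^ 2
          - 2 * α * b * V ^ 2 + (1 - a * α - b * 2) * ⟪g t, v t⟫ := by
        rw [hD_def]
        simp only
        rw [e1, e2, e3]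
        ring
      rw [hc0, zero_mul, add_zero] at hDval
      have hD1 : D t ≤ -(a * G ^ 2) - α * b * V ^ 2 := by
        rw [hDval]
        have : a * ⟪fderiv ℝ (gradient f) (x t) (v t), v t⟫ ≤ a * (L * V ^ 2) :=
          mul_le_mul_of_nonneg_left hHv ha0.le
        have haL : a * L = α * b := by rw [ha_def, hb_def]; ring
        nlinarith
      -- upper bound on E t
      have hip : ⟪g t, v t⟫ ≤ G * V := real_inner_le_norm _ _
      have hEub : E t ≤ P * G ^ 2 + Q * V ^ 2 := by
        rw [hE_def, hP_def, hQ_def]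
        simp only
        have hf := hup (x t)
        have h2GV : G * V ≤ (G ^ 2 + V ^ 2) / 2 := by nlinarith [sq_nonneg (G - V)]
        have haip : a * ⟪g t, v t⟫ ≤ a * ((G ^ 2 + V ^ 2) / 2) :=
          mul_le_mul_of_nonneg_left (le_trans hip h2GV) ha0.le
        have hfub : f (x t) ≤ G ^ 2 * (1 / (2 * μ)) := by
          have := hup (x t)
          rw [div_eq_mul_one_div] at this
          exact this
        nlinarith
      have hCa : C₂ * P ≤ a := by
        have : C₂ ≤ a / P := min_le_left _ _
        rwa [le_div_iff₀ hP0] at this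
      have hCb : C₂ * Q ≤ α * b := by
        have : C₂ ≤ α * b / Q := min_le_right _ _
        rwa [le_div_iff₀ hQ0] at this
      have hCE : C₂ * E t ≤ a * G ^ 2 + α * b * V ^ 2 := by
        calc C₂ * E t ≤ C₂ * (P * G ^ 2 + Q * V ^ 2) :=
              mul_le_mul_of_nonneg_left hEub hC₂0.le
          _ = C₂ * P * G ^ 2 + C₂ * Q * V ^ 2 := by ring
          _ ≤ a * G ^ 2 + α * b * V ^ 2 := by
              nlinarith [mul_le_mul_of_nonneg_right hCa (sq_nonneg G),
                mul_le_mul_of_nonneg_right hCb (sq_nonneg V)]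
      linarith
    -- Gronwall
    have hΦ : ∀ t, HasDerivAt (fun t => Real.exp (C₂ * t) * E t)
        (Real.exp (C₂ * t) * C₂ * E t + Real.exp (C₂ * t) * D t) t := by
      intro t
      have he : HasDerivAt (fun t => Real.exp (C₂ * t)) (Real.exp (C₂ * t) * C₂) t := by
        have : HasDerivAt (fun t : ℝ => C₂ * t) C₂ t := by
          simpa using (hasDerivAt_id t).const_mul C₂
        exact this.exp
      exact he.mul (hE t)
    have hanti : Antitone (fun t => Real.exp (C₂ * t) * E t) := by
      apply antitone_of_deriv_nonpos
      · exact fun t => (hΦ t).differentiableAt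
      · intro t
        rw [(hΦ t).deriv]
        have h1 := hDle t
        have h2 : Real.exp (C₂ * t) * D t ≤ Real.exp (C₂ * t) * (-C₂ * E t) :=
          mul_le_mul_of_nonneg_left h1 (Real.exp_nonneg _)
        nlinarith [Real.exp_pos (C₂ * t)]
    intro t ht
    have hkey : Real.exp (C₂ * t) * E t ≤ Real.exp (C₂ * 0) * E 0 := hanti ht
    rw [mul_zero, Real.exp_zero, one_mul] at hkey
    have hfinal : E t ≤ Real.exp (-C₂ * t) * E 0 := by
      have hexp : Real.exp (-C₂ * t) * Real.exp (C₂ * t) = 1 := by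
        rw [← Real.exp_add]
        norm_num
      calc E t = Real.exp (-C₂ * t) * (Real.exp (C₂ * t) * E t) := by
            rw [← mul_assoc, hexp, one_mul]
        _ ≤ Real.exp (-C₂ * t) * E 0 :=
            mul_le_mul_of_nonneg_left hkey (Real.exp_nonneg _)
    rw [hE_def] at hfinal
    simp only [hg_def] at hfinal
    exact hfinal
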